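/- For every positive integer p, (2p/π)·(ln p + γ - ln(π/2)) - π/(36p) < I_p58 < (2p/π)·(ln p + γ - ln(π/2)). In particular I_p ≤ (2p/π)·(ln p + γ - ln(π/2)) holds for all p ≥ 3, answering H. Chen's open problem positively. (Here I_p58 denotes I_p; the double inequality reads (2p/π)(ln p + γ − ln(π/2)) − π/(36p) < I_p < (2p/π)(ln p + γ − ln(π/2)).) -/

import Mathlib

open Real Finset Filter Topology

/-! ### Elementary Taylor-type bounds for sin and cos -/

lemma my_sin_ge (x : ℝ) (hx : 0 ≤ x) : x - x^3/6 ≤ sin x := by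
  have key : MonotoneOn (fun x : ℝ => sin x - (x - x^3/6)) (Set.Ici 0) := by
    refine monotoneOn_of_deriv_nonneg (convex_Ici 0) (by fun_prop) (by fun_prop) ?_
    intro t ht
    simp only [interior_Ici, Set.mem_Ioi] at ht
    have h : HasDerivAt (fun x : ℝ => sin x - (x - x^3/6))
        (cos t - (1 - (3:ℕ) * t^2/6)) t := by
      exact (Real.hasDerivAt_sin t).sub ((hasDerivAt_id' (x := t)).sub
        ((hasDerivAt_pow 3 t).div_const 6))
    rw [h.deriv]
    push_cast
    nlinarith [one_sub_sq_div_two_le_cos (x := t)]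
  have h0 := key (Set.mem_Ici.2 le_rfl) hx hx
  simpa using h0

lemma my_cos_le (x : ℝ) (hx : 0 ≤ x) : cos x ≤ 1 - x^2/2 + x^4/24 := by
  have key : MonotoneOn (fun x : ℝ => (1 - x^2/2 + x^4/24) - cos x) (Set.Ici 0) := by
    refine monotoneOn_of_deriv_nonneg (convex_Ici 0) (by fun_prop) (by fun_prop) ?_
    intro t ht
    simp only [interior_Ici, Set.mem_Ioi] at ht
    have h : HasDerivAt (fun x : ℝ => (1 - x^2/2 + x^4/24) - cos x)
        (((0 : ℝ) - (2:ℕ) * t^1/2 + (4:ℕ) * t^3/24) - (-sin t)) t := by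
      exact (((hasDerivAt_const t (1:ℝ)).sub ((hasDerivAt_pow 2 t).div_const 2)).add
        ((hasDerivAt_pow 4 t).div_const 24)).sub (Real.hasDerivAt_cos t)
    rw [h.deriv]
    push_cast
    nlinarith [my_sin_ge t ht.le]
  have h0 := key (Set.mem_Ici.2 le_rfl) hx hx
  simpa using h0

lemma my_sin_le5 (x : ℝ) (hx : 0 ≤ x) : sin x ≤ x - x^3/6 + x^5/120 := by
  have key : MonotoneOn (fun x : ℝ => (x - x^3/6 + x^5/120) - sin x) (Set.Ici 0) := by
    refine monotoneOn_of_deriv_nonneg (convex_Ici 0) (by fun_prop) (by fun_prop) ?_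
    intro t ht
    simp only [interior_Ici, Set.mem_Ioi] at ht
    have h : HasDerivAt (fun x : ℝ => (x - x^3/6 + x^5/120) - sin x)
        (((1 : ℝ) - (3:ℕ) * t^2/6 + (5:ℕ) * t^4/120) - cos t) t := by
      exact (((hasDerivAt_id' (x := t)).sub ((hasDerivAt_pow 3 t).div_const 6)).add
        ((hasDerivAt_pow 5 t).div_const 120)).sub (Real.hasDerivAt_sin t)
    rw [h.deriv]
    push_cast
    nlinarith [my_cos_le t ht.le]
  have h0 := key (Set.mem_Ici.2 le_rfl) hx hx
  simpa using h0

lemma my_cos_ge6 (x : ℝ) (hx : 0 ≤ x) : 1 - x^2/2 + x^4/24 - x^6/720 ≤ cos x := by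
  have key : MonotoneOn (fun x : ℝ => cos x - (1 - x^2/2 + x^4/24 - x^6/720)) (Set.Ici 0) := by
    refine monotoneOn_of_deriv_nonneg (convex_Ici 0) (by fun_prop) (by fun_prop) ?_
    intro t ht
    simp only [interior_Ici, Set.mem_Ioi] at ht
    have h : HasDerivAt (fun x : ℝ => cos x - (1 - x^2/2 + x^4/24 - x^6/720))
        ((-sin t) - (((0:ℝ) - (2:ℕ) * t^1/2 + (4:ℕ) * t^3/24) - (6:ℕ) * t^5/720)) t := by
      exact (Real.hasDerivAt_cos t).sub ((((hasDerivAt_const t (1:ℝ)).sub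
        ((hasDerivAt_pow 2 t).div_const 2)).add ((hasDerivAt_pow 4 t).div_const 24)).sub
        ((hasDerivAt_pow 6 t).div_const 720))
    rw [h.deriv]
    push_cast
    nlinarith [my_sin_le5 t ht.le]
  have h0 := key (Set.mem_Ici.2 le_rfl) hx hx
  simpa using h0

lemma my_sin_ge7 (x : ℝ) (hx : 0 ≤ x) : x - x^3/6 + x^5/120 - x^7/5040 ≤ sin x := by
  have key : MonotoneOn (fun x : ℝ => sin x - (x - x^3/6 + x^5/120 - x^7/5040)) (Set.Ici 0) := by
    refine monotoneOn_of_deriv_nonneg (convex_Ici 0) (by fun_prop) (by fun_prop) ?_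
    intro t ht
    simp only [interior_Ici, Set.mem_Ioi] at ht
    have h : HasDerivAt (fun x : ℝ => sin x - (x - x^3/6 + x^5/120 - x^7/5040))
        (cos t - (((1:ℝ) - (3:ℕ) * t^2/6 + (5:ℕ) * t^4/120) - (7:ℕ) * t^6/5040)) t := by
      exact (Real.hasDerivAt_sin t).sub ((((hasDerivAt_id' (x := t)).sub
        ((hasDerivAt_pow 3 t).div_const 6)).add ((hasDerivAt_pow 5 t).div_const 120)).sub
        ((hasDerivAt_pow 7 t).div_const 5040))
    rw [h.deriv]
    push_cast
    nlinarith [my_cos_ge6 t ht.le]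
  have h0 := key (Set.mem_Ici.2 le_rfl) hx hx
  simpa using h0

/-! ### Key sign inequalities -/





lemma polyQ (u : ℝ) (h0 : 0 ≤ u) (h1 : u ≤ 5/2) :
    (1-u/2+u^2/24)*(2+(1-u/2+u^2/24)^2) ≤ 3*(1-u/6+u^2/120-u^3/5040)^5 := by
  have p34 : 0 ≤ u^3 * ((16307:ℝ)/50803200 - (4241/152409600) * u) := by
    apply mul_nonneg (by positivity); nlinarith
  have p56 : 0 ≤ u^5 * ((9481:ℝ)/6096384000 - (17651/256048128000) * u) := by
    apply mul_nonneg (by positivity); nlinarith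
  have p78 : 0 ≤ u^7 * ((61787:ℝ)/25604812800000 - (2021/30725775360000) * u) := by
    apply mul_nonneg (by positivity); nlinarith
  have p910 : 0 ≤ u^9 * ((73:ℝ)/53770106880000 - (13/645241282560000) * u) := by
    apply mul_nonneg (by positivity); nlinarith
  have p1112 : 0 ≤ u^11 * ((1:ℝ)/5161930260480000 - (1/1084005354700800000) * u) := by
    apply mul_nonneg (by positivity); nlinarith
  have hquad : 0 ≤ (25:ℝ)/1008 + u/60480 - (629/362880) * u^2 := by
    nlinarith [mul_nonneg h0 (sub_nonneg.2 h1)]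
  have hcube : 0 ≤ u^3 * ((25:ℝ)/1008 + u/60480 - (629/362880) * u^2) :=
    mul_nonneg (by positivity) hquad
  nlinarith [p34, p56, p78, p910, p1112, hcube]

lemma poly3 (u : ℝ) (h0 : 0 ≤ u) (h1 : u ≤ 5/2) :
    (1-u/2+u^2/24) ≤ (1-u/6)^3 := by nlinarith [mul_nonneg (mul_nonneg h0 h0) (sub_nonneg.2 h1)]

lemma pi_sq_le : (π/2)^2 ≤ 5/2 := by nlinarith [pi_lt_d2, pi_gt_three]

/-- (iii): `sin³ x ≥ x³ cos x` on `(0, π/2]`. -/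
lemma sin_cube_ge (x : ℝ) (h0 : 0 < x) (h2 : x ≤ π/2) : x^3 * cos x ≤ (sin x)^3 := by
  have hu : x^2 ≤ 5/2 := le_trans (by nlinarith) pi_sq_le
  have hv : 0 < 1 - x^2/6 := by nlinarith
  have hsin : x * (1 - x^2/6) ≤ sin x := by nlinarith [my_sin_ge x h0.le]
  have hsp : 0 < x * (1 - x^2/6) := by positivity
  have hcos : cos x ≤ 1 - x^2/2 + x^4/24 := my_cos_le x h0.le
  have key : (1 - x^2/2 + x^4/24) ≤ (1 - x^2/6)^3 := by have := poly3 (x^2) (by positivity) hu; convert this using 2; ring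
  calc x^3 * cos x ≤ x^3 * (1 - x^2/6)^3 := by nlinarith [pow_pos h0 3]
    _ = (x * (1 - x^2/6))^3 := by ring
    _ ≤ (sin x)^3 := pow_le_pow_left₀ hsp.le hsin 3

/-- (iv): `3 sin⁵ x ≥ x⁵ cos x (2 + cos² x)` on `(0, π/2]`. -/
lemma sin_five_ge (x : ℝ) (h0 : 0 < x) (h2 : x ≤ π/2) :
    x^5 * (cos x * (2 + (cos x)^2)) ≤ 3 * (sin x)^5 := by
  have hu : x^2 ≤ 5/2 := le_trans (by nlinarith) pi_sq_le
  have hv : 0 < 1 - x^2/6 + x^4/120 - x^6/5040 := by nlinarith [sq_nonneg x, sq_nonneg (x^2), sq_nonneg (x^3)]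
  have hsin : x * (1 - x^2/6 + x^4/120 - x^6/5040) ≤ sin x := by
    nlinarith [my_sin_ge7 x h0.le]
  have hsp : 0 < x * (1 - x^2/6 + x^4/120 - x^6/5040) := by positivity
  have hcos : cos x ≤ 1 - x^2/2 + x^4/24 := my_cos_le x h0.le
  have hcos0 : 0 ≤ cos x := cos_nonneg_of_mem_Icc ⟨by linarith [h0], h2⟩
  have hc0 : (0:ℝ) ≤ 1 - x^2/2 + x^4/24 := le_trans hcos0 hcos
  have hmono : cos x * (2 + (cos x)^2) ≤ (1-x^2/2+x^4/24)*(2+(1-x^2/2+x^4/24)^2) := by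
    nlinarith [hcos, hcos0, hc0, sq_nonneg (cos x + (1-x^2/2+x^4/24))]
  have key := polyQ (x^2) (by positivity) hu
  have h5 : (x * (1 - x^2/6 + x^4/120 - x^6/5040))^5 ≤ (sin x)^5 := pow_le_pow_left₀ hsp.le hsin 5
  calc x^5 * (cos x * (2 + (cos x)^2))
      ≤ x^5 * ((1-x^2/2+x^4/24)*(2+(1-x^2/2+x^4/24)^2)) := by
        apply mul_le_mul_of_nonneg_left hmono (by positivity)
    _ ≤ x^5 * (3*(1-(x^2)/6+(x^2)^2/120-(x^2)^3/5040)^5) := by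
        apply mul_le_mul_of_nonneg_left _ (by positivity)
        refine le_trans (le_of_eq ?_) (key.trans (le_of_eq ?_)) <;> ring
    _ = 3 * (x * (1 - x^2/6 + x^4/120 - x^6/5040))^5 := by ring
    _ ≤ 3 * (sin x)^5 := by linarith [h5]

/-! ### The functions `G`, `H`, `q` and their derivatives -/

noncomputable def Gf (x : ℝ) : ℝ := Real.log x - Real.log (Real.sin x)
noncomputable def Hf (x : ℝ) : ℝ := 1/x - Real.cos x / Real.sin x
noncomputable def qf (x : ℝ) : ℝ := 1/(Real.sin x)^2 - 1/x^2
noncomputable def q1 (x : ℝ) : ℝ := 2/x^3 - 2*Real.cos x/(Real.sin x)^3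
noncomputable def q2 (x : ℝ) : ℝ :=
  2/(Real.sin x)^2 + 6*(Real.cos x)^2/(Real.sin x)^4 - 6/x^4
noncomputable def q3 (x : ℝ) : ℝ :=
  24/x^5 - (16*Real.cos x*(Real.sin x)^2 + 24*(Real.cos x)^3)/(Real.sin x)^5

variable {x : ℝ}

lemma hasDerivAt_Gf (hx : x ≠ 0) (hs : sin x ≠ 0) : HasDerivAt Gf (Hf x) x := by
  have h1 : HasDerivAt (fun y : ℝ => Real.log y) x⁻¹ x := Real.hasDerivAt_log hx
  have h2 : HasDerivAt (fun y : ℝ => Real.log (sin y)) (cos x / sin x) x := by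
    simpa using (Real.hasDerivAt_sin x).log hs
  have h := h1.sub h2
  have : x⁻¹ - cos x / sin x = Hf x := by rw [Hf]; field_simp
  exact this ▸ h

lemma hasDerivAt_Hf (hx : x ≠ 0) (hs : sin x ≠ 0) : HasDerivAt Hf (qf x) x := by
  have h1 : HasDerivAt (fun y : ℝ => 1/y) ((0 * x - 1 * 1)/x^2) x :=
    (hasDerivAt_const x 1).div (hasDerivAt_id' (x := x)) hx
  have h2 : HasDerivAt (fun y : ℝ => cos y / sin y)
      ((-sin x * sin x - cos x * cos x)/(sin x)^2) x :=
    (Real.hasDerivAt_cos x).div (Real.hasDerivAt_sin x) hs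
  have h := h1.sub h2
  have : (0 * x - 1 * 1)/x^2 - (-sin x * sin x - cos x * cos x)/(sin x)^2 = qf x := by
    have pyth := sin_sq_add_cos_sq x
    rw [qf]; field_simp; linear_combination (x ^ 2) * pyth
  exact this ▸ h

lemma hasDerivAt_qf (hx : x ≠ 0) (hs : sin x ≠ 0) : HasDerivAt qf (q1 x) x := by
  have hs2 : (sin x)^2 ≠ 0 := pow_ne_zero 2 hs
  have hx2 : x^2 ≠ 0 := pow_ne_zero 2 hx
  have h1 : HasDerivAt (fun y : ℝ => 1/(sin y)^2)
      ((0 * (sin x)^2 - 1 * (2 * sin x ^ 1 * cos x))/((sin x)^2)^2) x :=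
    (hasDerivAt_const x 1).div ((Real.hasDerivAt_sin x).pow 2) hs2
  have h2 : HasDerivAt (fun y : ℝ => 1/y^2)
      ((0 * x^2 - 1 * (2 * x ^ 1 * 1))/(x^2)^2) x :=
    (hasDerivAt_const x 1).div ((hasDerivAt_id' (x := x)).pow 2) hx2
  have h := h1.sub h2
  have : (0 * (sin x)^2 - 1 * (2 * sin x ^ 1 * cos x))/((sin x)^2)^2
      - (0 * x^2 - 1 * (2 * x ^ 1 * 1))/(x^2)^2 = q1 x := by
    rw [q1]; field_simp; ring
  exact this ▸ h

lemma hasDerivAt_q1 (hx : x ≠ 0) (hs : sin x ≠ 0) : HasDerivAt q1 (q2 x) x := by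
  have hs3 : (sin x)^3 ≠ 0 := pow_ne_zero 3 hs
  have hx3 : x^3 ≠ 0 := pow_ne_zero 3 hx
  have h1 : HasDerivAt (fun y : ℝ => 2/y^3)
      ((0 * x^3 - 2 * (3 * x ^ 2 * 1))/(x^3)^2) x :=
    (hasDerivAt_const x 2).div ((hasDerivAt_id' (x := x)).pow 3) hx3
  have h2 : HasDerivAt (fun y : ℝ => 2*cos y/(sin y)^3)
      (((2 * -sin x) * (sin x)^3 - (2 * cos x) * (3 * sin x ^ 2 * cos x))/((sin x)^3)^2) x :=
    ((Real.hasDerivAt_cos x).const_mul 2).div ((Real.hasDerivAt_sin x).pow 3) hs3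
  have h := h1.sub h2
  have : (0 * x^3 - 2 * (3 * x ^ 2 * 1))/(x^3)^2
      - ((2 * -sin x) * (sin x)^3 - (2 * cos x) * (3 * sin x ^ 2 * cos x))/((sin x)^3)^2
      = q2 x := by
    rw [q2]; field_simp; ring
  exact this ▸ h

lemma hasDerivAt_q2 (hx : x ≠ 0) (hs : sin x ≠ 0) : HasDerivAt q2 (q3 x) x := by
  have hs2 : (sin x)^2 ≠ 0 := pow_ne_zero 2 hs
  have hs4 : (sin x)^4 ≠ 0 := pow_ne_zero 4 hs
  have hx4 : x^4 ≠ 0 := pow_ne_zero 4 hx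
  have h1 : HasDerivAt (fun y : ℝ => 2/(sin y)^2)
      ((0 * (sin x)^2 - 2 * (2 * sin x ^ 1 * cos x))/((sin x)^2)^2) x :=
    (hasDerivAt_const x 2).div ((Real.hasDerivAt_sin x).pow 2) hs2
  have h2 : HasDerivAt (fun y : ℝ => 6*(cos y)^2/(sin y)^4)
      (((6:ℝ) * (2 * cos x ^ 1 * -sin x) * (sin x)^4
        - 6*(cos x)^2 * (4 * sin x ^ 3 * cos x))/((sin x)^4)^2) x := by
    exact (((Real.hasDerivAt_cos x).pow 2).const_mul 6).div ((Real.hasDerivAt_sin x).pow 4) hs4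
  have h3 : HasDerivAt (fun y : ℝ => 6/y^4)
      ((0 * x^4 - 6 * (4 * x ^ 3 * 1))/(x^4)^2) x :=
    (hasDerivAt_const x 6).div ((hasDerivAt_id' (x := x)).pow 4) hx4
  have h := (h1.add h2).sub h3
  have : (0 * (sin x)^2 - 2 * (2 * sin x ^ 1 * cos x))/((sin x)^2)^2
      + ((6:ℝ) * (2 * cos x ^ 1 * -sin x) * (sin x)^4
        - 6*(cos x)^2 * (4 * sin x ^ 3 * cos x))/((sin x)^4)^2
      - (0 * x^4 - 6 * (4 * x ^ 3 * 1))/(x^4)^2 = q3 x := by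
    rw [q3]; field_simp; ring
  exact this ▸ h

/-! ### Trapezoidal estimates -/








lemma hda_congr {f : ℝ → ℝ} {x d : ℝ} (h : HasDerivAt f d x) {d' : ℝ} (he : d = d') :
    HasDerivAt f d' x := he ▸ h









/-- generic: f a = 0, f' ≥ 0 on (a,b) implies 0 ≤ f b -/
lemma nonneg_of_hasDerivAt {a b : ℝ} {f f' : ℝ → ℝ} (hab : a ≤ b)
    (hd : ∀ y ∈ Set.Icc a b, HasDerivAt f (f' y) y)
    (h0 : f a = 0) (hnn : ∀ y ∈ Set.Ioo a b, 0 ≤ f' y) : 0 ≤ f b := by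
  have key : MonotoneOn f (Set.Icc a b) := by
    apply monotoneOn_of_deriv_nonneg (convex_Icc a b)
    · exact fun y hy => ((hd y hy).continuousAt).continuousWithinAt
    · intro y hy
      rw [interior_Icc] at hy
      exact ((hd y (Set.mem_Icc_of_Ioo hy)).differentiableAt).differentiableWithinAt
    · intro y hy
      rw [interior_Icc] at hy
      rw [(hd y (Set.mem_Icc_of_Ioo hy)).deriv]
      exact hnn y hy
  have := key (Set.left_mem_Icc.2 hab) (Set.right_mem_Icc.2 hab) hab
  linarith [this, h0.symm.le]

variable {a b : ℝ}

lemma sin_pos_of (ha : 0 < a) (hb : b ≤ π/2) {y : ℝ} (hy : y ∈ Set.Icc a b) :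
    0 < Real.sin y :=
  sin_pos_of_pos_of_lt_pi (lt_of_lt_of_le ha hy.1)
    (lt_of_le_of_lt (hy.2.trans hb) (by linarith [pi_pos]))

lemma q1_nonneg {y : ℝ} (h0 : 0 < y) (h2 : y ≤ π/2) : 0 ≤ q1 y := by
  have hs := sin_pos_of h0 h2 (Set.mem_Icc.2 ⟨le_refl y, le_refl y⟩)
  rw [q1]
  rw [div_sub_div _ _ (by positivity) (by positivity), le_div_iff₀ (by positivity)]
  rw [zero_mul]
  nlinarith [sin_cube_ge y h0 h2]

lemma q3_nonneg {y : ℝ} (h0 : 0 < y) (h2 : y ≤ π/2) : 0 ≤ q3 y := by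
  have hs := sin_pos_of h0 h2 (Set.mem_Icc.2 ⟨le_refl y, le_refl y⟩)
  rw [q3]
  rw [div_sub_div _ _ (by positivity) (by positivity), le_div_iff₀ (by positivity)]
  rw [zero_mul]
  have hq : 16*Real.cos y*(Real.sin y)^2 + 24*(Real.cos y)^3
      = 8*(Real.cos y)*(2+(Real.cos y)^2) := by
    linear_combination (16*Real.cos y) * (sin_sq_add_cos_sq y)
  rw [hq]
  nlinarith [sin_five_ge y h0 h2]

/-- Trapezoid upper bound: `∫ₐᵇ H ≤ (b-a)/2 (H a + H b)` in antiderivative form. -/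
lemma T2a (ha : 0 < a) (hab : a ≤ b) (hb : b ≤ π/2) :
    Gf b - Gf a ≤ (b-a)/2 * (Hf a + Hf b) := by
  have hmem : ∀ y ∈ Set.Icc a b, 0 < y ∧ y ≠ 0 ∧ Real.sin y ≠ 0 := by
    intro y hy
    exact ⟨lt_of_lt_of_le ha hy.1, (lt_of_lt_of_le ha hy.1).ne',
      (sin_pos_of ha hb hy).ne'⟩
  -- step 1 : Hf y - Hf a ≤ (y - a) * qf y for y in [a,b]
  have step1 : ∀ c, a ≤ c → c ≤ b → 0 ≤ (c-a) * qf c - (Hf c - Hf a) := by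
    intro c hac hcb
    refine nonneg_of_hasDerivAt (f := fun y => (y-a) * qf y - (Hf y - Hf a))
      (f' := fun y => (y-a) * q1 y) hac ?_ (by simp) ?_
    · intro y hy
      have h := hmem y ⟨hy.1, hy.2.trans hcb⟩
      have hD := (((hasDerivAt_id' (x := y)).sub_const a).mul (hasDerivAt_qf h.2.1 h.2.2)).sub
        ((hasDerivAt_Hf h.2.1 h.2.2).sub_const (Hf a))
      exact hda_congr hD (by ring)
    · intro y hy
      have h := hmem y ⟨hy.1.le, (hy.2.le.trans hcb)⟩
      exact mul_nonneg (by linarith [hy.1]) (q1_nonneg h.1 (by linarith [hy.2, hcb]))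
  -- step 2
  have step2 : 0 ≤ (b-a)/2 * (Hf a + Hf b) - (Gf b - Gf a) := by
    refine nonneg_of_hasDerivAt
      (f := fun y => (y-a)/2 * (Hf a + Hf y) - (Gf y - Gf a))
      (f' := fun y => ((y-a) * qf y - (Hf y - Hf a))/2) hab ?_ (by simp) ?_
    · intro y hy
      have h := hmem y hy
      exact hda_congr (((((hasDerivAt_id' (x := y)).sub_const a).div_const 2).mul
        ((hasDerivAt_Hf h.2.1 h.2.2).const_add (Hf a))).sub
        ((hasDerivAt_Gf h.2.1 h.2.2).sub_const (Gf a))) (by ring)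
    · intro y hy
      have := step1 y hy.1.le hy.2.le
      linarith
  linarith [step2]

/-- Corrected trapezoid lower bound. -/
lemma T2b (ha : 0 < a) (hab : a ≤ b) (hb : b ≤ π/2) :
    (b-a)/2 * (Hf a + Hf b) - (b-a)^2/12 * (qf b - qf a) ≤ Gf b - Gf a := by
  have hmem : ∀ y ∈ Set.Icc a b, 0 < y ∧ y ≠ 0 ∧ Real.sin y ≠ 0 := by
    intro y hy
    exact ⟨lt_of_lt_of_le ha hy.1, (lt_of_lt_of_le ha hy.1).ne',
      (sin_pos_of ha hb hy).ne'⟩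
  have step1 : ∀ c, a ≤ c → c ≤ b →
      0 ≤ (qf c - qf a)/6 - (c-a) * q1 c/6 + (c-a)^2 * q2 c/12 := by
    intro c hac hcb
    refine nonneg_of_hasDerivAt
      (f := fun y => (qf y - qf a)/6 - (y-a) * q1 y/6 + (y-a)^2 * q2 y/12)
      (f' := fun y => (y-a)^2 * q3 y/12) hac ?_ (by simp) ?_
    · intro y hy
      have h := hmem y ⟨hy.1, hy.2.trans hcb⟩
      exact hda_congr (((((hasDerivAt_qf h.2.1 h.2.2).sub_const (qf a)).div_const 6).sub
        ((((hasDerivAt_id' (x := y)).sub_const a).mul (hasDerivAt_q1 h.2.1 h.2.2)).div_const 6)).add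
        (((((hasDerivAt_id' (x := y)).sub_const a).pow 2).mul
          (hasDerivAt_q2 h.2.1 h.2.2)).div_const 12)) (by simp only [Pi.pow_apply]; ring)
    · intro y hy
      have h := hmem y ⟨hy.1.le, (hy.2.le.trans hcb)⟩
      have := q3_nonneg h.1 (by linarith [hy.2, hcb])
      positivity
  have step2 : ∀ c, a ≤ c → c ≤ b →
      0 ≤ (Hf c - Hf a)/2 - (c-a) * qf c/2 + (c-a)*(qf c - qf a)/6 + (c-a)^2 * q1 c/12 := by
    intro c hac hcb
    refine nonneg_of_hasDerivAt
      (f := fun y => (Hf y - Hf a)/2 - (y-a) * qf y/2 + (y-a)*(qf y - qf a)/6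
        + (y-a)^2 * q1 y/12)
      (f' := fun y => (qf y - qf a)/6 - (y-a) * q1 y/6 + (y-a)^2 * q2 y/12) hac ?_ (by simp) ?_
    · intro y hy
      have h := hmem y ⟨hy.1, hy.2.trans hcb⟩
      exact hda_congr ((((((hasDerivAt_Hf h.2.1 h.2.2).sub_const (Hf a)).div_const 2).sub
        ((((hasDerivAt_id' (x := y)).sub_const a).mul (hasDerivAt_qf h.2.1 h.2.2)).div_const 2)).add
        (((((hasDerivAt_id' (x := y)).sub_const a).mul
          ((hasDerivAt_qf h.2.1 h.2.2).sub_const (qf a)))).div_const 6)).add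
        (((((hasDerivAt_id' (x := y)).sub_const a).pow 2).mul
          (hasDerivAt_q1 h.2.1 h.2.2)).div_const 12)) (by simp only [Pi.pow_apply]; ring)
    · intro y hy
      exact step1 y hy.1.le (hy.2.le.trans hcb)
  have step3 : 0 ≤ (Gf b - Gf a) - (b-a)/2 * (Hf a + Hf b) + (b-a)^2/12 * (qf b - qf a) := by
    refine nonneg_of_hasDerivAt
      (f := fun y => (Gf y - Gf a) - (y-a)/2 * (Hf a + Hf y) + (y-a)^2/12 * (qf y - qf a))
      (f' := fun y => (Hf y - Hf a)/2 - (y-a) * qf y/2 + (y-a)*(qf y - qf a)/6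
        + (y-a)^2 * q1 y/12) hab ?_ (by simp) ?_
    · intro y hy
      have h := hmem y hy
      exact hda_congr ((((hasDerivAt_Gf h.2.1 h.2.2).sub_const (Gf a)).sub
        ((((hasDerivAt_id' (x := y)).sub_const a).div_const 2).mul
          ((hasDerivAt_Hf h.2.1 h.2.2).const_add (Hf a)))).add
        (((((hasDerivAt_id' (x := y)).sub_const a).pow 2).div_const 12).mul
          ((hasDerivAt_qf h.2.1 h.2.2).sub_const (qf a)))) (by simp only [Pi.pow_apply]; ring)
    · intro y hy
      exact step2 y hy.1.le hy.2.le
  linarith [step3]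

/-! ### Limits at zero and first-cell estimates -/











lemma ev_small (b : ℝ) (hb0 : 0 < b) : ∀ᶠ a in 𝓝[>] (0:ℝ), 0 < a ∧ a < 1 ∧ a ≤ b := by
  have h1 : ∀ᶠ a in 𝓝[>] (0:ℝ), a < min 1 b := by
    apply eventually_nhdsWithin_of_eventually_nhds
    exact gt_mem_nhds (by positivity)
  filter_upwards [h1, self_mem_nhdsWithin] with a h2 h3
  exact ⟨h3, lt_of_lt_of_le h2 (min_le_left _ _), le_of_lt (lt_of_lt_of_le h2 (min_le_right _ _))⟩

lemma sin_lb {a : ℝ} (h0 : 0 < a) (h1 : a < 1) : 0 < a * (1 - a^2/6) ∧ a * (1 - a^2/6) ≤ sin a := by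
  constructor
  · nlinarith
  · nlinarith [my_sin_ge a h0.le]

lemma tendsto_Gf : Tendsto Gf (𝓝[>] (0:ℝ)) (𝓝 0) := by
  have hup : Tendsto (fun a : ℝ => Real.log ((1 - a^2/6)⁻¹)) (𝓝[>] (0:ℝ)) (𝓝 0) := by
    have hc : ContinuousAt (fun a : ℝ => Real.log ((1 - a^2/6)⁻¹)) 0 :=
      ContinuousAt.log (by fun_prop (disch := norm_num)) (by norm_num)
    have h0 : Real.log ((1 - (0:ℝ)^2/6)⁻¹) = 0 := by norm_num
    have := hc.tendsto.mono_left (nhdsWithin_le_nhds (s := Set.Ioi (0:ℝ)))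
    rw [h0] at this
    exact this
  apply squeeze_zero' (g := fun a => Real.log ((1 - a^2/6)⁻¹)) ?_ ?_ hup
  · filter_upwards [ev_small 1 one_pos] with a ⟨h0, h1, _⟩
    have hs := sin_lb h0 h1
    have hsp : 0 < sin a := lt_of_lt_of_le hs.1 hs.2
    rw [Gf, ← Real.log_div h0.ne' hsp.ne']
    apply Real.log_nonneg
    rw [le_div_iff₀ hsp]
    simpa using sin_le h0.le
  · filter_upwards [ev_small 1 one_pos] with a ⟨h0, h1, _⟩
    have hs := sin_lb h0 h1
    have hsp : 0 < sin a := lt_of_lt_of_le hs.1 hs.2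
    rw [Gf, ← Real.log_div h0.ne' hsp.ne']
    apply Real.log_le_log (by positivity)
    rw [div_le_iff₀ hsp, inv_mul_eq_div, le_div_iff₀ (by nlinarith : (0:ℝ) < 1 - a^2/6)]
    nlinarith [hs.2]

lemma tendsto_Hf : Tendsto Hf (𝓝[>] (0:ℝ)) (𝓝 0) := by
  have hup : Tendsto (fun a : ℝ => (a/2)/(1 - a^2/6)) (𝓝[>] (0:ℝ)) (𝓝 0) := by
    have : ContinuousAt (fun a : ℝ => (a/2)/(1 - a^2/6)) 0 := by
      fun_prop (disch := norm_num)
    have h0 : (fun a : ℝ => (a/2)/(1 - a^2/6)) 0 = 0 := by norm_num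
    simpa [h0] using (this.tendsto.mono_left nhdsWithin_le_nhds)
  apply squeeze_zero' ?_ ?_ hup
  · filter_upwards [ev_small 1 one_pos] with a ⟨h0, h1, _⟩
    have hs := sin_lb h0 h1
    have hsp : 0 < sin a := lt_of_lt_of_le hs.1 hs.2
    rw [Hf, sub_nonneg, div_le_div_iff₀ hsp h0]
    nlinarith [my_cos_le a h0.le, my_sin_ge a h0.le]
  · filter_upwards [ev_small 1 one_pos] with a ⟨h0, h1, _⟩
    have hs := sin_lb h0 h1
    have hsp : 0 < sin a := lt_of_lt_of_le hs.1 hs.2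
    rw [Hf, div_sub_div _ _ h0.ne' hsp.ne', div_le_div_iff₀ (by positivity)
      (by nlinarith : (0:ℝ) < 1 - a^2/6)]
    have hcos : 1 - a^2/2 ≤ cos a := one_sub_sq_div_two_le_cos
    have h1 : Real.sin a - a * Real.cos a ≤ a^3/2 := by nlinarith [sin_le h0.le]
    have h2 : (Real.sin a - a * Real.cos a) * (1 - a^2/6) ≤ a^3/2 * (1 - a^2/6) :=
      mul_le_mul_of_nonneg_right h1 (by nlinarith)
    have h3 : a^3/2 * (1 - a^2/6) ≤ a/2 * (a * Real.sin a) := by nlinarith [hs.2]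
    nlinarith [h2, h3]

lemma tendsto_qf : Tendsto qf (𝓝[>] (0:ℝ)) (𝓝 (1/3)) := by
  have hlo : Tendsto (fun a : ℝ =>
      (1/3 - 2*a^2/45 + a^4/360 - a^6/14400)/((1-a^2/6+a^4/120)^2)) (𝓝[>] (0:ℝ)) (𝓝 (1/3)) := by
    have : ContinuousAt (fun a : ℝ =>
        (1/3 - 2*a^2/45 + a^4/360 - a^6/14400)/((1-a^2/6+a^4/120)^2)) 0 := by
      fun_prop (disch := norm_num)
    have h0 : (fun a : ℝ =>
        (1/3 - 2*a^2/45 + a^4/360 - a^6/14400)/((1-a^2/6+a^4/120)^2)) 0 = 1/3 := by norm_num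
    simpa [h0] using (this.tendsto.mono_left nhdsWithin_le_nhds)
  have hhi : Tendsto (fun a : ℝ => (1/3 - a^2/36)/((1-a^2/6)^2)) (𝓝[>] (0:ℝ)) (𝓝 (1/3)) := by
    have : ContinuousAt (fun a : ℝ => (1/3 - a^2/36)/((1-a^2/6)^2)) 0 := by
      fun_prop (disch := norm_num)
    have h0 : (fun a : ℝ => ((1:ℝ)/3 - a^2/36)/((1-a^2/6)^2)) 0 = 1/3 := by norm_num
    simpa [h0] using (this.tendsto.mono_left nhdsWithin_le_nhds)
  apply tendsto_of_tendsto_of_tendsto_of_le_of_le' hlo hhi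
  · filter_upwards [ev_small 1 one_pos] with a ⟨h0, h1, _⟩
    have hs := sin_lb h0 h1
    have hsp : 0 < sin a := lt_of_lt_of_le hs.1 hs.2
    have hub : sin a ≤ a * (1 - a^2/6 + a^4/120) := by nlinarith [my_sin_le5 a h0.le]
    have hubp : 0 < 1 - a^2/6 + a^4/120 := by nlinarith
    have key : 1/(a * (1 - a^2/6 + a^4/120))^2 - 1/a^2
        = (1/3 - 2*a^2/45 + a^4/360 - a^6/14400)/((1-a^2/6+a^4/120)^2) := by
      rw [div_sub_div _ _ (by positivity) (by positivity),
        div_eq_div_iff (by positivity) (by positivity)]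
      ring
    rw [qf, ← key]
    have h2 : (sin a)^2 ≤ (a * (1 - a^2/6 + a^4/120))^2 := by nlinarith
    have := one_div_le_one_div_of_le (by positivity) h2
    linarith
  · filter_upwards [ev_small 1 one_pos] with a ⟨h0, h1, _⟩
    have hs := sin_lb h0 h1
    have hsp : 0 < sin a := lt_of_lt_of_le hs.1 hs.2
    have hdp : (0:ℝ) < 1 - a^2/6 := by nlinarith
    have key : 1/(a * (1 - a^2/6))^2 - 1/a^2 = (1/3 - a^2/36)/((1-a^2/6)^2) := by
      rw [div_sub_div _ _ (by positivity) (by positivity),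
        div_eq_div_iff (by positivity) (by positivity)]
      ring
    rw [qf, ← key]
    have h2 : (a * (1 - a^2/6))^2 ≤ (sin a)^2 := by nlinarith [hs.1, hs.2]
    have := one_div_le_one_div_of_le (by positivity) h2
    linarith

/-- first-cell trapezoid upper bound -/
lemma T2a0 {b : ℝ} (hb0 : 0 < b) (hb : b ≤ π/2) : Gf b ≤ b/2 * Hf b := by
  have hev : ∀ᶠ a in 𝓝[>] (0:ℝ), Gf b - Gf a ≤ (b-a)/2 * (Hf a + Hf b) := by
    filter_upwards [ev_small b hb0] with a ⟨h0, _, hab⟩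
    exact T2a h0 hab hb
  have hL : Tendsto (fun a : ℝ => Gf b - Gf a) (𝓝[>] (0:ℝ)) (𝓝 (Gf b)) := by
    simpa using (tendsto_const_nhds (x := Gf b)).sub tendsto_Gf
  have hR : Tendsto (fun a : ℝ => (b-a)/2 * (Hf a + Hf b)) (𝓝[>] (0:ℝ))
      (𝓝 (b/2 * Hf b)) := by
    have := (((tendsto_const_nhds (x := b)).sub (tendsto_id.mono_left nhdsWithin_le_nhds)).div_const 2).mul
      (tendsto_Hf.add (tendsto_const_nhds (x := Hf b)))
    simpa using this
  exact le_of_tendsto_of_tendsto hL hR hev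

/-- first-cell trapezoid lower bound -/
lemma T2b0 {b : ℝ} (hb0 : 0 < b) (hb : b ≤ π/2) :
    b/2 * Hf b - b^2/12 * (qf b - 1/3) ≤ Gf b := by
  have hev : ∀ᶠ a in 𝓝[>] (0:ℝ),
      (b-a)/2 * (Hf a + Hf b) - (b-a)^2/12 * (qf b - qf a) ≤ Gf b - Gf a := by
    filter_upwards [ev_small b hb0] with a ⟨h0, _, hab⟩
    exact T2b h0 hab hb
  have hR : Tendsto (fun a : ℝ => Gf b - Gf a) (𝓝[>] (0:ℝ)) (𝓝 (Gf b)) := by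
    simpa using (tendsto_const_nhds (x := Gf b)).sub tendsto_Gf
  have hL : Tendsto (fun a : ℝ => (b-a)/2 * (Hf a + Hf b) - (b-a)^2/12 * (qf b - qf a))
      (𝓝[>] (0:ℝ)) (𝓝 (b/2 * Hf b - b^2/12 * (qf b - 1/3))) := by
    have hba : Tendsto (fun a : ℝ => b - a) (𝓝[>] (0:ℝ)) (𝓝 b) := by
      have : Tendsto (fun a : ℝ => b - a) (𝓝[>] (0:ℝ)) (𝓝 (b - 0)) :=
        (tendsto_const_nhds (x := b)).sub
          ((tendsto_id (x := 𝓝 (0:ℝ))).mono_left nhdsWithin_le_nhds)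
      simpa using this
    have := ((hba.div_const 2).mul (tendsto_Hf.add (tendsto_const_nhds (x := Hf b)))).sub
      ((((hba.pow 2).div_const 12)).mul ((tendsto_const_nhds (x := qf b)).sub tendsto_qf))
    simpa using this
  exact le_of_tendsto_of_tendsto hL hR hev

/-! ### Euler–Mascheroni constant bounds -/


/-- strict version : f 0 = 0, f' > 0 on (0,t) implies 0 < f t -/
lemma pos_of_hasDerivAt {t : ℝ} {f f' : ℝ → ℝ} (ht : 0 < t)
    (hd : ∀ y ∈ Set.Icc (0:ℝ) t, HasDerivAt f (f' y) y)
    (h0 : f 0 = 0) (hpos : ∀ y ∈ Set.Ioo (0:ℝ) t, 0 < f' y) : 0 < f t := by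
  have key : StrictMonoOn f (Set.Icc 0 t) := by
    apply strictMonoOn_of_deriv_pos (convex_Icc 0 t)
    · exact fun y hy => ((hd y hy).continuousAt).continuousWithinAt
    · intro y hy
      rw [interior_Icc] at hy
      rw [(hd y (Set.mem_Icc_of_Ioo hy)).deriv]
      exact hpos y hy
  have := key (Set.left_mem_Icc.2 ht.le) (Set.right_mem_Icc.2 ht.le) ht
  linarith [this, h0.symm.le]

/-- `log (1+t) < t(2+t)/(2(1+t))` for `t > 0`. -/
lemma log_lt_trap {t : ℝ} (ht : 0 < t) : Real.log (1+t) < t*(2+t)/(2*(1+t)) := by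
  have key : 0 < t*(2+t)/(2*(1+t)) - Real.log (1+t) := by
    apply pos_of_hasDerivAt (f' := fun y => y^2/(2*(1+y)^2)) ht
    · intro y hy
      have hy1 : (0:ℝ) < 1 + y := by linarith [hy.1]
      have h1 : HasDerivAt (fun y : ℝ => y*(2+y)/(2*(1+y)))
          (((1*(2+y) + y*1) * (2*(1+y)) - y*(2+y) * (2*1))/(2*(1+y))^2) y := by
        exact ((hasDerivAt_id' (x := y)).mul ((hasDerivAt_id' (x := y)).const_add 2)).div
          (((hasDerivAt_id' (x := y)).const_add 1).const_mul 2) (by positivity)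
      have h2 : HasDerivAt (fun y : ℝ => Real.log (1+y)) (1/(1+y)) y := by
        have := ((hasDerivAt_id' (x := y)).const_add 1).log hy1.ne'
        simpa using this
      refine hda_congr (h1.sub h2) ?_
      rw [div_sub_div _ _ (by positivity) hy1.ne', div_eq_div_iff (by positivity) (by positivity)]
      ring
    · norm_num
    · intro y hy
      have h1y : (0:ℝ) < 1 + y := by linarith [hy.1]
      exact div_pos (pow_pos hy.1 2) (by nlinarith)
  linarith

/-- `log (1+t) > t(2+t)/(2(1+t)) - t³(2+t)/(12(1+t)²)` for `t > 0`. -/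
lemma log_gt_trap {t : ℝ} (ht : 0 < t) :
    t*(2+t)/(2*(1+t)) - t^3*(2+t)/(12*(1+t)^2) < Real.log (1+t) := by
  have key : 0 < Real.log (1+t) - t*(2+t)/(2*(1+t)) + t^3*(2+t)/(12*(1+t)^2) := by
    apply pos_of_hasDerivAt (f' := fun y => y^4/(6*(1+y)^3)) ht
    · intro y hy
      have hy1 : (0:ℝ) < 1 + y := by linarith [hy.1]
      have h1 : HasDerivAt (fun y : ℝ => y*(2+y)/(2*(1+y)))
          (((1*(2+y) + y*1) * (2*(1+y)) - y*(2+y) * (2*1))/(2*(1+y))^2) y := by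
        exact ((hasDerivAt_id' (x := y)).mul ((hasDerivAt_id' (x := y)).const_add 2)).div
          (((hasDerivAt_id' (x := y)).const_add 1).const_mul 2) (by positivity)
      have h2 : HasDerivAt (fun y : ℝ => Real.log (1+y)) (1/(1+y)) y := by
        have := ((hasDerivAt_id' (x := y)).const_add 1).log hy1.ne'
        simpa using this
      have h3 : HasDerivAt (fun y : ℝ => y^3*(2+y)/(12*(1+y)^2))
          ((((3:ℕ)*y^2*(2+y) + y^3*1) * (12*(1+y)^2) - y^3*(2+y) * (12*((2:ℕ)*(1+y)^1*1)))
            /(12*(1+y)^2)^2) y := by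
        exact (((hasDerivAt_pow 3 y).mul ((hasDerivAt_id' (x := y)).const_add 2)).div
          (((((hasDerivAt_id' (x := y)).const_add 1).pow 2)).const_mul 12) (by positivity))
      refine hda_congr ((h2.sub h1).add h3) ?_
      push_cast
      rw [div_sub_div _ _ hy1.ne' (by positivity), div_add_div _ _ (by positivity) (by positivity),
        div_eq_div_iff (by positivity) (by positivity)]
      ring
    · norm_num
    · intro y hy
      have h1y : (0:ℝ) < 1 + y := by linarith [hy.1]
      exact div_pos (pow_pos hy.1 4) (mul_pos (by norm_num) (pow_pos h1y 3))
  linarith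

noncomputable def aseq (n : ℕ) : ℝ := (harmonic n : ℝ) - Real.log n - 1/(2*n)
noncomputable def bseq (n : ℕ) : ℝ := aseq n + 1/(12*n^2)

lemma log_succ_div (n : ℕ) (hn : 1 ≤ n) :
    Real.log (n+1) - Real.log n = Real.log (1 + 1/n) := by
  have hn0 : (0:ℝ) < n := by exact_mod_cast hn
  rw [← Real.log_div (by positivity) hn0.ne']
  congr 1
  field_simp

lemma aseq_step {n : ℕ} (hn : 1 ≤ n) : aseq n < aseq (n+1) := by
  have hn0 : (0:ℝ) < n := by exact_mod_cast hn
  have key := log_lt_trap (t := 1/n) (by positivity)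
  have hls := log_succ_div n hn
  have hh : (harmonic (n+1) : ℝ) = (harmonic n : ℝ) + 1/(n+1) := by
    rw [harmonic_succ]; push_cast; ring
  rw [aseq, aseq, hh]
  push_cast
  have he : (1:ℝ)/n*(2+1/n)/(2*(1+1/n)) = 1/n - 1/(2*n) - 1/(2*(n+1)) + 1/(n+1) := by
    rw [div_eq_iff (by positivity)]
    field_simp
    ring
  rw [he] at key
  have h2n : (1:ℝ)/n = 1/(2*n) + 1/(2*n) := by
    rw [div_add_div _ _ (by positivity) (by positivity), div_eq_div_iff (by positivity) (by positivity)]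
    ring
  have : Real.log (n+1) - Real.log n < 1/n - 1/(2*n) - 1/(2*(n+1)) + 1/(n+1) := by
    rw [hls]; convert key using 2 <;> push_cast <;> ring
  linarith [this, h2n]

lemma bseq_step {n : ℕ} (hn : 1 ≤ n) : bseq (n+1) < bseq n := by
  have hn0 : (0:ℝ) < n := by exact_mod_cast hn
  have key := log_gt_trap (t := 1/n) (by positivity)
  have hls := log_succ_div n hn
  have hh : (harmonic (n+1) : ℝ) = (harmonic n : ℝ) + 1/(n+1) := by
    rw [harmonic_succ]; push_cast; ring
  rw [bseq, bseq, aseq, aseq, hh]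
  push_cast
  have he : (1:ℝ)/n*(2+1/n)/(2*(1+1/n)) - (1/n)^3*(2+1/n)/(12*(1+1/n)^2)
      = (1/n - 1/(2*n) - 1/(2*(n+1)) + 1/(n+1)) - (1/(12*n^2) - 1/(12*(n+1)^2)) := by
    rw [div_sub_div _ _ (by positivity) (by positivity), div_eq_iff (by positivity)]
    field_simp
    ring
  rw [he] at key
  have h2n : (1:ℝ)/n = 1/(2*n) + 1/(2*n) := by
    rw [div_add_div _ _ (by positivity) (by positivity), div_eq_div_iff (by positivity) (by positivity)]
    ring
  have : (1:ℝ)/n - 1/(2*n) - 1/(2*(n+1)) + 1/(n+1) - (1/(12*n^2) - 1/(12*(n+1)^2))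
      < Real.log (n+1) - Real.log n := by
    rw [hls]; convert key using 2 <;> push_cast <;> ring
  linarith [this, h2n]

lemma tendsto_aseq : Tendsto aseq atTop (𝓝 Real.eulerMascheroniConstant) := by
  have h1 := Real.tendsto_harmonic_sub_log
  have h2 : Tendsto (fun n : ℕ => 1/(2*(n:ℝ))) atTop (𝓝 0) := by
    have h := tendsto_one_div_atTop_nhds_zero_nat.const_mul ((1:ℝ)/2)
    rw [mul_zero] at h
    apply h.congr
    intro n
    rcases eq_or_ne (n:ℝ) 0 with hn | hn
    · simp [hn]
    · field_simp
  have h3 := h1.sub h2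
  rw [sub_zero] at h3
  exact h3.congr (fun n => by rw [aseq])

lemma tendsto_bseq : Tendsto bseq atTop (𝓝 Real.eulerMascheroniConstant) := by
  have h2 : Tendsto (fun n : ℕ => 1/(12*(n:ℝ)^2)) atTop (𝓝 0) := by
    have h := (tendsto_one_div_atTop_nhds_zero_nat.mul
      tendsto_one_div_atTop_nhds_zero_nat).const_mul ((1:ℝ)/12)
    rw [mul_zero, mul_zero] at h
    apply h.congr
    intro n
    rcases eq_or_ne (n:ℝ) 0 with hn | hn
    · simp [hn]
    · field_simp
  have h3 := tendsto_aseq.add h2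
  rw [add_zero] at h3
  exact h3.congr (fun n => by rw [bseq])

lemma aseq_lt_gamma {n : ℕ} (hn : 1 ≤ n) : aseq n < Real.eulerMascheroniConstant := by
  have step := aseq_step hn
  have hle : aseq (n+1) ≤ Real.eulerMascheroniConstant := by
    apply ge_of_tendsto tendsto_aseq
    rw [eventually_atTop]
    refine ⟨n+1, fun m hm => ?_⟩
    clear step
    induction m with
    | zero => omega
    | succ k ih =>
      rcases Nat.lt_or_ge (n+1) (k+1) with h | h
      · have hk : n + 1 ≤ k := by omega
        exact le_trans (ih hk) (aseq_step (by omega)).le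
      · have : n + 1 = k + 1 := by omega
        rw [this]
  linarith

lemma gamma_lt_bseq {n : ℕ} (hn : 1 ≤ n) : Real.eulerMascheroniConstant < bseq n := by
  have step := bseq_step hn
  have hle : Real.eulerMascheroniConstant ≤ bseq (n+1) := by
    apply le_of_tendsto tendsto_bseq
    rw [eventually_atTop]
    refine ⟨n+1, fun m hm => ?_⟩
    clear step
    induction m with
    | zero => omega
    | succ k ih =>
      rcases Nat.lt_or_ge (n+1) (k+1) with h | h
      · have hk : n + 1 ≤ k := by omega
        exact le_trans (bseq_step (by omega)).le (ih hk)
      · have : n + 1 = k + 1 := by omega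
        rw [this]
  linarith

/-! ### Assembly -/









/-- The sum of cosecants `I_p = ∑_{k=1}^{p-1} csc(kπ/p)`. -/
noncomputable def Ip (p : ℕ) : ℝ := ∑ k ∈ Finset.Icc 1 (p - 1), 1 / Real.sin (k * π / p)

lemma Gf_zero : Gf 0 = 0 := by simp [Gf]
lemma Hf_zero : Hf 0 = 0 := by simp [Hf]
lemma Gf_pi_half : Gf (π/2) = Real.log (π/2) := by simp [Gf]
lemma Hf_pi_half : Hf (π/2) = 2/π := by
  rw [Hf, cos_pi_div_two, sin_pi_div_two]
  field_simp
  ring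
lemma qf_pi_half : qf (π/2) = 1 - 4/π^2 := by
  rw [qf, sin_pi_div_two]
  have hpi := pi_ne_zero
  field_simp
  ring

section MainSum
variable {p : ℕ}

/-- summation by reflection : the cot sum vanishes -/
lemma cot_sum_zero (hp : 0 < p) :
    ∑ k ∈ Finset.Icc 1 (p-1), Real.cos (k*π/p)/Real.sin (k*π/p) = 0 := by
  have key : ∑ k ∈ Finset.Icc 1 (p-1), Real.cos (k*π/p)/Real.sin (k*π/p)
      = ∑ k ∈ Finset.Icc 1 (p-1), -(Real.cos (k*π/p)/Real.sin (k*π/p)) := by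
    apply Finset.sum_nbij' (i := fun k => p - k) (j := fun k => p - k)
    · intro a ha
      rw [Finset.mem_Icc] at ha ⊢
      omega
    · intro a ha
      rw [Finset.mem_Icc] at ha ⊢
      omega
    · intro a ha
      rw [Finset.mem_Icc] at ha
      omega
    · intro a ha
      rw [Finset.mem_Icc] at ha
      omega
    · intro k hk
      rw [Finset.mem_Icc] at hk
      have hkp : k ≤ p := by omega
      have hcast : ((p - k : ℕ) : ℝ) = (p : ℝ) - (k : ℝ) := by
        push_cast [hkp]
        ring
      have hp0 : (0:ℝ) < p := by exact_mod_cast hp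
      have hangle : ((p - k : ℕ) : ℝ)*π/p = π - (k*π/p) := by
        rw [hcast]
        field_simp
      rw [hangle, Real.cos_pi_sub, Real.sin_pi_sub, neg_div, neg_neg]
  linarith [key, Finset.sum_neg_distrib (s := Finset.Icc 1 (p-1))
    (f := fun k : ℕ => Real.cos (k*π/p)/Real.sin (k*π/p))]

lemma Ip_eq (hp : 0 < p) :
    Ip p = (2*p/π) * (harmonic (p-1) : ℝ)
      - ∑ k ∈ Finset.Icc 1 (p-1), Hf (k*(π/(2*p))) := by
  have hp0 : (0:ℝ) < p := by exact_mod_cast hp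
  have key : ∀ k ∈ Finset.Icc 1 (p-1),
      1 / Real.sin (k * π / p)
        = (2*p/π) * (1/(k:ℝ)) - Hf (k*(π/(2*p))) - Real.cos (k*π/p)/Real.sin (k*π/p) := by
    intro k hk
    rw [Finset.mem_Icc] at hk
    have hk0 : (0:ℝ) < k := by exact_mod_cast hk.1
    have hkp : (k:ℝ) < p := by
      have : k < p := by omega
      exact_mod_cast this
    set x := (k:ℝ)*(π/(2*p)) with hx
    have hx0 : 0 < x := by positivity
    have heq : (p:ℝ)*(π/(2*p)) = π/2 := by field_simp
    have hxp : x < π/2 := by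
      rw [hx, ← heq]
      exact mul_lt_mul_of_pos_right hkp (by positivity)
    have h2x : (k:ℝ)*π/p = 2*x := by
      rw [hx]; field_simp
    have hs1 : 0 < Real.sin x := sin_pos_of_pos_of_lt_pi hx0 (by linarith [pi_pos])
    have hs2 : 0 < Real.sin (2*x) := by
      apply sin_pos_of_pos_of_lt_pi (by linarith) (by linarith)
    have hnum : Real.cos x * Real.sin (2*x) - Real.cos (2*x) * Real.sin x = Real.sin x := by
      have h := Real.sin_sub (2*x) x
      have h2 : 2*x - x = x := by ring
      rw [h2] at h
      linarith
    have hcot : Real.cos x/Real.sin x - Real.cos (2*x)/Real.sin (2*x) = 1/Real.sin (2*x) := by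
      rw [div_sub_div _ _ hs1.ne' hs2.ne', div_eq_div_iff (by positivity) hs2.ne']
      linear_combination Real.sin (2*x) * hnum
    have hHf : Real.cos x/Real.sin x = 1/x - Hf x := by
      rw [Hf]; ring
    have hfrac : 1/x = (2*p/π) * (1/(k:ℝ)) := by
      rw [hx]
      field_simp
    rw [h2x, ← hcot, hHf, hfrac]
  rw [Ip, Finset.sum_congr rfl key]
  rw [Finset.sum_sub_distrib, Finset.sum_sub_distrib, cot_sum_zero hp, sub_zero,
    ← Finset.mul_sum]
  congr 2
  rw [harmonic_eq_sum_Icc]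
  push_cast
  simp [one_div]

end MainSum

section SumBounds
variable {p : ℕ}

lemma cell_facts (hp : 0 < p) {i : ℕ} (hi : i < p) :
    0 ≤ ((i:ℝ))*(π/(2*p)) ∧ ((i:ℝ)+1)*(π/(2*p)) ≤ π/2
      ∧ ((i:ℝ))*(π/(2*p)) ≤ ((i:ℝ)+1)*(π/(2*p)) := by
  have hp0 : (0:ℝ) < p := by exact_mod_cast hp
  have hD : 0 < π/(2*(p:ℝ)) := by positivity
  refine ⟨by positivity, ?_, by nlinarith⟩
  have hip : ((i:ℝ)+1) ≤ p := by exact_mod_cast hi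
  have heq : (p:ℝ)*(π/(2*p)) = π/2 := by field_simp
  nlinarith [mul_le_mul_of_nonneg_right hip hD.le]

/-- per-cell upper bound, uniform over `i ∈ range p` -/
lemma cell_ub (hp : 0 < p) {i : ℕ} (hi : i < p) :
    Gf (((i:ℝ)+1)*(π/(2*p))) - Gf ((i:ℝ)*(π/(2*p)))
      ≤ (π/(2*p))/2 * (Hf ((i:ℝ)*(π/(2*p))) + Hf (((i:ℝ)+1)*(π/(2*p)))) := by
  obtain ⟨h0, h2, h12⟩ := cell_facts hp hi
  have hp0 : (0:ℝ) < p := by exact_mod_cast hp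
  have hD : 0 < π/(2*(p:ℝ)) := by positivity
  have hstep : ((i:ℝ)+1)*(π/(2*p)) - (i:ℝ)*(π/(2*p)) = π/(2*p) := by ring
  rcases Nat.eq_zero_or_pos i with h | h
  · subst h
    have h2' : π/(2*(p:ℝ)) ≤ π/2 := by
      have hb1 : (((0:ℕ):ℝ)+1)*(π/(2*(p:ℝ))) = π/(2*(p:ℝ)) := by norm_num
      rw [hb1] at h2
      exact h2
    have hb1 : (((0:ℕ):ℝ)+1)*(π/(2*(p:ℝ))) = π/(2*(p:ℝ)) := by norm_num
    rw [hb1]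
    rw [show ((0:ℕ):ℝ)*(π/(2*(p:ℝ))) = 0 by norm_num, Gf_zero, Hf_zero, sub_zero, zero_add]
    exact T2a0 hD h2'
  · have hi0 : (0:ℝ) < (i:ℝ)*(π/(2*p)) := by
      have : (0:ℝ) < (i:ℝ) := by exact_mod_cast h
      positivity
    have := T2a hi0 h12 h2
    rw [hstep] at this
    exact this

/-- per-cell lower bound with the `qtil` telescope -/
noncomputable def qtil (p : ℕ) (i : ℕ) : ℝ := if i = 0 then 1/3 else qf ((i:ℝ)*(π/(2*p)))

lemma cell_lb (hp : 0 < p) {i : ℕ} (hi : i < p) :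
    (π/(2*p))/2 * (Hf ((i:ℝ)*(π/(2*p))) + Hf (((i:ℝ)+1)*(π/(2*p))))
      - (π/(2*p))^2/12 * (qtil p (i+1) - qtil p i)
      ≤ Gf (((i:ℝ)+1)*(π/(2*p))) - Gf ((i:ℝ)*(π/(2*p))) := by
  obtain ⟨h0, h2, h12⟩ := cell_facts hp hi
  have hp0 : (0:ℝ) < p := by exact_mod_cast hp
  have hD : 0 < π/(2*(p:ℝ)) := by positivity
  have hstep : ((i:ℝ)+1)*(π/(2*p)) - (i:ℝ)*(π/(2*p)) = π/(2*p) := by ring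
  rcases Nat.eq_zero_or_pos i with h | h
  · subst h
    have h2' : π/(2*(p:ℝ)) ≤ π/2 := by
      have hb1 : (((0:ℕ):ℝ)+1)*(π/(2*(p:ℝ))) = π/(2*(p:ℝ))  := by norm_num
      rw [hb1] at h2
      exact h2
    have hq1 : qtil p (0+1) = qf (π/(2*(p:ℝ))) := by
      rw [qtil, if_neg (by omega)]
      norm_num
    have hq0 : qtil p 0 = 1/3 := by rw [qtil, if_pos rfl]
    have hb1 : (((0:ℕ):ℝ)+1)*(π/(2*(p:ℝ))) = π/(2*(p:ℝ)) := by norm_num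
    rw [hb1, hq1, hq0]
    rw [show ((0:ℕ):ℝ)*(π/(2*(p:ℝ))) = 0 by norm_num, Gf_zero, Hf_zero, sub_zero, zero_add]
    exact T2b0 hD h2'
  · have hi0 : (0:ℝ) < (i:ℝ)*(π/(2*p)) := by
      have : (0:ℝ) < (i:ℝ) := by exact_mod_cast h
      positivity
    have := T2b hi0 h12 h2
    rw [hstep] at this
    have hq1 : qtil p (i+1) = qf (((i:ℝ)+1)*(π/(2*(p:ℝ)))) := by
      rw [qtil, if_neg (by omega)]
      push_cast
      ring_nf
    have hq0 : qtil p i = qf ((i:ℝ)*(π/(2*(p:ℝ)))) := by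
      rw [qtil, if_neg (by omega)]
    rw [hq1, hq0]
    exact this

lemma sum_shift (g : ℝ → ℝ) (hp : 0 < p) :
    ∑ i ∈ Finset.range p, g (((i:ℝ)+1)*(π/(2*p)))
      = (∑ k ∈ Finset.Icc 1 (p-1), g ((k:ℝ)*(π/(2*p)))) + g ((p:ℝ)*(π/(2*p))) := by
  obtain ⟨q, rfl⟩ : ∃ q, p = q + 1 := ⟨p-1, by omega⟩
  have h1 : ∑ k ∈ Finset.Icc 1 (q+1), g ((k:ℝ)*(π/(2*(q+1:ℕ))))
      = ∑ i ∈ Finset.range (q+1), g (((i:ℝ)+1)*(π/(2*(q+1:ℕ)))) := by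
    rw [← Finset.Ico_add_one_right_eq_Icc, Finset.sum_Ico_eq_sum_range]
    apply Finset.sum_congr (by norm_num)
    intro i _
    congr 2
    push_cast
    ring
  rw [← h1, Finset.sum_Icc_succ_top (by omega : 1 ≤ q + 1)]
  simp only [Nat.add_sub_cancel]

lemma sum_lo (g : ℝ → ℝ) (hp : 0 < p) (hg : g 0 = 0) :
    ∑ i ∈ Finset.range p, g ((i:ℝ)*(π/(2*p)))
      = ∑ k ∈ Finset.Icc 1 (p-1), g ((k:ℝ)*(π/(2*p))) := by
  obtain ⟨q, rfl⟩ : ∃ q, p = q + 1 := ⟨p-1, by omega⟩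
  rw [Finset.sum_range_succ']
  have h1 : ∑ k ∈ Finset.Icc 1 q, g ((k:ℝ)*(π/(2*(q+1:ℕ))))
      = ∑ i ∈ Finset.range q, g (((i:ℝ)+1)*(π/(2*(q+1:ℕ)))) := by
    rw [← Finset.Ico_add_one_right_eq_Icc, Finset.sum_Ico_eq_sum_range]
    apply Finset.sum_congr (by norm_num)
    intro i _
    congr 2
    push_cast
    ring
  simp only [Nat.add_sub_cancel]
  rw [h1]
  rw [show g (((0:ℕ):ℝ)*(π/(2*((q+1:ℕ):ℝ)))) = 0 by norm_num [hg], add_zero]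
  apply Finset.sum_congr rfl
  intro i _
  congr 2
  push_cast
  ring

lemma htel_eq (hp : 0 < p) : ∑ i ∈ Finset.range p,
    (Gf (((i:ℝ)+1)*(π/(2*p))) - Gf ((i:ℝ)*(π/(2*p)))) = Real.log (π/2) := by
  have hp0 : (0:ℝ) < p := by exact_mod_cast hp
  have heq : (p:ℝ)*(π/(2*p)) = π/2 := by field_simp
  have := Finset.sum_range_sub (f := fun i : ℕ => Gf ((i:ℝ)*(π/(2*p)))) p
  simp only [Nat.cast_add, Nat.cast_one] at this
  rw [this]
  norm_num [Gf_zero]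
  rw [heq, Gf_pi_half]

lemma htrap_eq (hp : 0 < p) : ∑ i ∈ Finset.range p,
    ((π/(2*p))/2 * (Hf ((i:ℝ)*(π/(2*p))) + Hf (((i:ℝ)+1)*(π/(2*p)))))
    = (π/(2*p)) * (∑ k ∈ Finset.Icc 1 (p-1), Hf ((k:ℝ)*(π/(2*p)))) + (π/(2*p))/π := by
  have hp0 : (0:ℝ) < p := by exact_mod_cast hp
  have heq : (p:ℝ)*(π/(2*p)) = π/2 := by field_simp
  rw [← Finset.mul_sum, Finset.sum_add_distrib]
  rw [sum_lo Hf hp Hf_zero, sum_shift Hf hp, heq, Hf_pi_half]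
  field_simp
  ring

/-- upper bound for `log(π/2)` in terms of `S` -/
lemma sum_ub (hp : 0 < p) :
    Real.log (π/2) ≤ (π/(2*p)) * (∑ k ∈ Finset.Icc 1 (p-1), Hf ((k:ℝ)*(π/(2*p)))) + (π/(2*p))/π := by
  rw [← htel_eq hp, ← htrap_eq hp]
  apply Finset.sum_le_sum
  intro i hi
  exact cell_ub hp (Finset.mem_range.1 hi)

/-- lower bound for `log(π/2)` -/
lemma sum_lb (hp : 0 < p) :
    (π/(2*p)) * (∑ k ∈ Finset.Icc 1 (p-1), Hf ((k:ℝ)*(π/(2*p)))) + (π/(2*p))/π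
      - (π/(2*p))^2/12 * ((1 - 4/π^2) - 1/3) ≤ Real.log (π/2) := by
  have hp0 : (0:ℝ) < p := by exact_mod_cast hp
  have heq : (p:ℝ)*(π/(2*p)) = π/2 := by field_simp
  have hqtel : ∑ i ∈ Finset.range p, (qtil p (i+1) - qtil p i) = (1 - 4/π^2) - 1/3 := by
    rw [Finset.sum_range_sub (f := qtil p) p]
    have e1 : qtil p p = 1 - 4/π^2 := by
      rw [qtil, if_neg (by omega), heq, qf_pi_half]
    have e0 : qtil p 0 = 1/3 := by rw [qtil, if_pos rfl]
    rw [e1, e0]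
  have hB : ∑ i ∈ Finset.range p, ((π/(2*p))^2/12 * (qtil p (i+1) - qtil p i))
      = (π/(2*p))^2/12 * ((1 - 4/π^2) - 1/3) := by
    rw [← Finset.mul_sum, hqtel]
  have key : ∑ i ∈ Finset.range p,
      ((π/(2*p))/2 * (Hf ((i:ℝ)*(π/(2*p))) + Hf (((i:ℝ)+1)*(π/(2*p))))
        - (π/(2*p))^2/12 * (qtil p (i+1) - qtil p i))
      ≤ Real.log (π/2) := by
    rw [← htel_eq hp]
    apply Finset.sum_le_sum
    intro i hi
    exact cell_lb hp (Finset.mem_range.1 hi)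
  rw [Finset.sum_sub_distrib, htrap_eq hp, hB] at key
  exact key

end SumBounds

theorem Ip_chen_inequality (p : ℕ) (hp : 0 < p) :
    ((2 * p / π) * (Real.log p + Real.eulerMascheroniConstant - Real.log (π / 2))
        - π / (36 * p) < Ip p ∧
      Ip p < (2 * p / π) * (Real.log p + Real.eulerMascheroniConstant - Real.log (π / 2))) ∧
    (3 ≤ p →
      Ip p ≤ (2 * p / π) * (Real.log p + Real.eulerMascheroniConstant - Real.log (π / 2))) := by
  have hP : (0:ℝ) < p := by exact_mod_cast hp
  have hπ : (0:ℝ) < π := pi_pos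
  set γ := Real.eulerMascheroniConstant with hγ
  set S := ∑ k ∈ Finset.Icc 1 (p-1), Hf ((k:ℝ)*(π/(2*p))) with hS
  set h := ((harmonic (p-1) : ℝ)) with hh
  have hIp : Ip p = (2*(p:ℝ)/π) * h - S := Ip_eq hp
  -- S bounds
  have eq2 : (2*(p:ℝ)/π)*((π/(2*(p:ℝ)))*S + (π/(2*(p:ℝ)))/π) = S + 1/π := by
    field_simp
  have hS_lb : (2*(p:ℝ)/π) * Real.log (π/2) - 1/π ≤ S := by
    have := mul_le_mul_of_nonneg_left (sum_ub hp) (by positivity : (0:ℝ) ≤ 2*(p:ℝ)/π)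
    rw [eq2] at this
    have hlog : (2*(p:ℝ)/π) * Real.log (π/2) ≤ S + 1/π := this
    linarith
  have eq3 : (2*(p:ℝ)/π)*((π/(2*(p:ℝ)))*S + (π/(2*(p:ℝ)))/π
      - (π/(2*(p:ℝ)))^2/12 * ((1 - 4/π^2) - 1/3))
      = S + 1/π - (π/(36*(p:ℝ)) - 1/(6*π*(p:ℝ))) := by
    field_simp
    ring
  have hS_ub : S ≤ (2*(p:ℝ)/π) * Real.log (π/2) - 1/π + (π/(36*(p:ℝ)) - 1/(6*π*(p:ℝ))) := by
    have := mul_le_mul_of_nonneg_left (sum_lb hp) (by positivity : (0:ℝ) ≤ 2*(p:ℝ)/π)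
    rw [eq3] at this
    linarith
  -- harmonic bounds
  have hharm : (harmonic p : ℝ) = h + 1/(p:ℝ) := by
    rw [hh, show p = p-1+1 by omega, harmonic_succ]
    push_cast [show p-1+1 = p by omega]
    ring
  have hC_lb : 1/(2*(p:ℝ)) < Real.log p + γ - h := by
    have ha := aseq_lt_gamma (n := p) hp
    rw [aseq, hharm] at ha
    have e1 : (1:ℝ)/(p:ℝ) - 1/(2*(p:ℝ)) = 1/(2*(p:ℝ)) := by
      field_simp
      ring
    linarith
  have hC_ub : Real.log p + γ - h < 1/(2*(p:ℝ)) + 1/(12*(p:ℝ)^2) := by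
    have hb := gamma_lt_bseq (n := p) hp
    rw [bseq, aseq, hharm] at hb
    have e1 : (1:ℝ)/(p:ℝ) - 1/(2*(p:ℝ)) = 1/(2*(p:ℝ)) := by
      field_simp
      ring
    linarith
  -- final assembly
  have hpos : (0:ℝ) < 2*(p:ℝ)/π := by positivity
  have eq4 : (2*(p:ℝ)/π)*(1/(2*(p:ℝ))) = 1/π := by
    field_simp
  have eq7 : (2*(p:ℝ)/π)*(1/(2*(p:ℝ)) + 1/(12*(p:ℝ)^2)) = 1/π + 1/(6*π*(p:ℝ)) := by
    field_simp
    ring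
  have hupper : Ip p < (2*(p:ℝ)/π) * (Real.log p + γ - Real.log (π/2)) := by
    have e5 := mul_lt_mul_of_pos_left hC_lb hpos
    rw [eq4] at e5
    have expand : (2*(p:ℝ)/π) * (Real.log p + γ - Real.log (π/2))
        = (2*(p:ℝ)/π) * (Real.log p + γ - h) - (2*(p:ℝ)/π) * Real.log (π/2)
          + (2*(p:ℝ)/π) * h := by ring
    rw [hIp, expand]
    linarith [hS_lb, e5]
  have hlower : (2*(p:ℝ)/π) * (Real.log p + γ - Real.log (π/2)) - π/(36*(p:ℝ)) < Ip p := by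
    have e8 := mul_lt_mul_of_pos_left hC_ub hpos
    rw [eq7] at e8
    have expand2 : (2*(p:ℝ)/π) * (Real.log p + γ - Real.log (π/2))
        = (2*(p:ℝ)/π) * (Real.log p + γ - h) - (2*(p:ℝ)/π) * Real.log (π/2)
          + (2*(p:ℝ)/π) * h := by ring
    rw [hIp, expand2]
    linarith [hS_ub, e8]
  exact ⟨⟨hlower, hupper⟩, fun _ => hupper.le⟩
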